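/- Let φ : ℕ → [1, ∞) be nondecreasing with limsup_n (n+1)^{1/p−1} / φ(n) = ∞, where 0 < p < 1. Then there exists a sequence of functions g_k ∈ H_p(G) with ‖g_k‖_{H_p} ≤ 1 and indices n_k such that ‖S_{n_k} g_k / φ(n_k)‖_{L^{p,∞}} → ∞; consequently sup over f in the unit ball of H_p of sup_n ‖S_n f/φ(n)‖_{L^{p,∞}} is infinite, i.e., the weight (n+1)^{1/p−1} in the maximal operator S̃_p^* cannot be improved. -/

import Mathlib

open MeasureTheory ENNReal Filter
open scoped Classical

noncomputable section

instance : TopologicalSpace (ZMod 2) := ⊥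
instance : DiscreteTopology (ZMod 2) := ⟨rfl⟩
instance : MeasurableSpace (ZMod 2) := ⊤
instance : BorelSpace (ZMod 2) := ⟨borel_eq_top_of_discrete.symm⟩
instance : IsTopologicalAddGroup (ZMod 2) where
  continuous_add := continuous_of_discreteTopology
  continuous_neg := continuous_of_discreteTopology

/-- The dyadic group `G = (ℤ/2)^ℕ`. -/
abbrev G2 : Type := ℕ → ZMod 2

/-- Normalized Haar (probability) measure on `G2`. -/
def muG : Measure G2 :=
  Measure.addHaarMeasure ⟨⟨Set.univ, isCompact_univ⟩, by
    rw [interior_univ]; exact Set.univ_nonempty⟩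

/-- Rademacher functions. -/
def rad (k : ℕ) (x : G2) : ℝ := (-1 : ℝ) ^ ((x k).val)

/-- Walsh–Paley functions. -/
def walsh (n : ℕ) (x : G2) : ℝ :=
  ∏ k ∈ Finset.range n, if n.testBit k then rad k x else 1

/-- Walsh–Dirichlet kernels. -/
def dirichlet (n : ℕ) (x : G2) : ℝ := ∑ k ∈ Finset.range n, walsh k x

/-- The cylinder sets `I_n`. -/
def cyl (n : ℕ) : Set G2 := {x | ∀ i < n, x i = 0}

/-- Walsh–Fourier coefficients. -/
def fhat (f : G2 → ℝ) (k : ℕ) : ℝ := ∫ x, f x * walsh k x ∂muG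

/-- Walsh–Fourier partial sums of a function. -/
def funS (f : G2 → ℝ) (n : ℕ) (x : G2) : ℝ :=
  ∑ k ∈ Finset.range n, fhat f k * walsh k x

/-- Partial sums of the Walsh series of a dyadic martingale given by coefficients `c`. -/
def mS (c : ℕ → ℝ) (n : ℕ) (x : G2) : ℝ := ∑ k ∈ Finset.range n, c k * walsh k x

/-- The martingale maximal function. -/
def mMax (c : ℕ → ℝ) (x : G2) : ℝ≥0∞ := ⨆ n : ℕ, (‖mS c (2 ^ n) x‖₊ : ℝ≥0∞)

/-- The martingale Hardy space quasi-norm `H_p`. -/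
def mHp (p : ℝ) (c : ℕ → ℝ) : ℝ≥0∞ := (∫⁻ x, (mMax c x) ^ p ∂muG) ^ (1 / p)

/-- The maximal function of an integrable function. -/
def funMax (f : G2 → ℝ) (x : G2) : ℝ≥0∞ := ⨆ n : ℕ, (‖funS f (2 ^ n) x‖₊ : ℝ≥0∞)

/-- The Hardy space quasi-norm of an integrable function. -/
def funHp (p : ℝ) (f : G2 → ℝ) : ℝ≥0∞ := (∫⁻ x, (funMax f x) ^ p ∂muG) ^ (1 / p)

/-- Weak `L^p` quasi-norm. -/
def weakLp (p : ℝ) (f : G2 → ℝ) : ℝ≥0∞ :=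
  ⨆ t : NNReal, (t : ℝ≥0∞) * (muG {x | (t : ℝ) < |f x|}) ^ (1 / p)


open scoped Pointwise

-- auxiliary lemmas

instance : muG.IsAddLeftInvariant := by unfold muG; infer_instance

lemma muG_univ : muG Set.univ = 1 := Measure.addHaarMeasure_self

lemma abs_rad (k : ℕ) (x : G2) : |rad k x| = 1 := by
  simp [rad, abs_pow]

lemma abs_walsh (n : ℕ) (x : G2) : |walsh n x| = 1 := by
  rw [walsh, Finset.abs_prod]
  rw [Finset.prod_eq_one]
  intro k _
  by_cases h : n.testBit k <;> simp [h, abs_rad]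

lemma walsh_ext (x : G2) {m N : ℕ} (h : m < 2 ^ N) :
    walsh m x = ∏ k ∈ Finset.range N, if m.testBit k then rad k x else 1 := by
  rcases le_total m N with hmn | hnm
  · exact Finset.prod_subset (Finset.range_subset_range.2 hmn) (by
      intro k _ hk
      simp only [Finset.mem_range, not_lt] at hk
      rw [Nat.testBit_lt_two_pow (lt_of_lt_of_le (Nat.lt_two_pow_self (n := m)) (Nat.pow_le_pow_right (by norm_num) hk))]
      simp)
  · exact (Finset.prod_subset (Finset.range_subset_range.2 hnm) (by
      intro k _ hk
      simp only [Finset.mem_range, not_lt] at hk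
      rw [Nat.testBit_lt_two_pow (lt_of_lt_of_le h (Nat.pow_le_pow_right (by norm_num) hk))]
      simp)).symm

lemma walsh_two_pow_add (x : G2) {n j : ℕ} (hj : j < 2 ^ n) :
    walsh (2 ^ n + j) x = rad n x * walsh j x := by
  have h1 : 2 ^ n + j < 2 ^ (n + 1) := by
    rw [pow_succ]; omega
  rw [walsh_ext x h1, walsh_ext x hj, Finset.prod_range_succ]
  have hbit : (2 ^ n + j).testBit n = true := by
    rw [Nat.testBit_two_pow_add_eq, Nat.testBit_lt_two_pow hj]; rfl
  rw [hbit, if_pos rfl, mul_comm]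
  congr 1
  apply Finset.prod_congr rfl
  intro k hk
  rw [Nat.testBit_two_pow_add_gt (Finset.mem_range.1 hk)]

lemma dirichlet_two_pow (n : ℕ) (x : G2) :
    dirichlet (2 ^ n) x = ∏ i ∈ Finset.range n, (1 + rad i x) := by
  induction n with
  | zero => simp [dirichlet, walsh]
  | succ n ih =>
    have h2 : 2 ^ (n + 1) = 2 ^ n + 2 ^ n := by rw [pow_succ]; omega
    rw [dirichlet, h2, Finset.sum_range_add]
    have : ∀ i ∈ Finset.range (2 ^ n), walsh (2 ^ n + i) x = rad n x * walsh i x := by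
      intro i hi
      exact walsh_two_pow_add x (Finset.mem_range.1 hi)
    rw [Finset.sum_congr rfl this, ← Finset.mul_sum, Finset.prod_range_succ]
    rw [← dirichlet, ih]
    ring

lemma one_add_rad (i : ℕ) (x : G2) : 1 + rad i x = if x i = 0 then 2 else 0 := by
  by_cases h : x i = 0
  · simp [rad, h, ZMod.val_zero]; norm_num
  · have hv : (x i).val = 1 := by
      have h1 : (x i).val < 2 := ZMod.val_lt (x i)
      have h2 : (x i).val ≠ 0 := fun hc => h ((ZMod.val_eq_zero _).1 hc)
      omega
    simp [rad, hv, h]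

lemma dirichlet_two_pow' (n : ℕ) (x : G2) :
    dirichlet (2 ^ n) x = if x ∈ cyl n then ((2 : ℝ) ^ n) else 0 := by
  rw [dirichlet_two_pow]
  by_cases h : x ∈ cyl n
  · rw [if_pos h]
    have hall : ∀ i ∈ Finset.range n, 1 + rad i x = 2 := fun i hi => by
      rw [one_add_rad, if_pos (h i (Finset.mem_range.1 hi))]
    rw [Finset.prod_congr rfl hall, Finset.prod_const, Finset.card_range]
  · rw [if_neg h]
    simp only [cyl, Set.mem_setOf_eq, not_forall] at h
    obtain ⟨i, hi, hxi⟩ := h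
    exact Finset.prod_eq_zero (Finset.mem_range.2 hi)
      (by rw [one_add_rad, if_neg hxi])

lemma measurableSet_cyl (n : ℕ) : MeasurableSet (cyl n) := by
  have : cyl n = ⋂ (i : ℕ) (_ : i < n), {x : G2 | x i = 0} := by
    ext x; simp [cyl]
  rw [this]
  refine MeasurableSet.iInter fun i => MeasurableSet.iInter fun _ => ?_
  have : MeasurableSet ((fun f : G2 => f i) ⁻¹' {0}) := (measurable_pi_apply i) trivial
  exact this

lemma muG_cyl (n : ℕ) : muG (cyl n) = ((2 : ℝ≥0∞) ^ n)⁻¹ := by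
  classical
  set e : (Fin n → ZMod 2) → G2 := fun s i => if h : i < n then s ⟨i, h⟩ else 0 with he
  have hvadd : ∀ s : Fin n → ZMod 2,
      e s +ᵥ cyl n = {x : G2 | ∀ i : Fin n, x (i : ℕ) = s i} := by
    intro s
    ext x
    rw [Set.mem_vadd_set_iff_neg_vadd_mem]
    simp only [vadd_eq_add, cyl, Set.mem_setOf_eq, Pi.add_apply, Pi.neg_apply]
    constructor
    · intro h i
      have h2 := h (i : ℕ) i.2
      rw [neg_add_eq_zero] at h2
      rw [← h2, he]
      simp [i.2]
    · intro h i hi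
      rw [neg_add_eq_zero, he]
      simp only [hi, dif_pos]
      exact (h ⟨i, hi⟩).symm
  have hcover : (⋃ s : Fin n → ZMod 2, e s +ᵥ cyl n) = Set.univ := by
    ext x
    simp only [Set.mem_iUnion, Set.mem_univ, iff_true]
    refine ⟨fun i => x (i : ℕ), ?_⟩
    rw [hvadd (fun i => x (i : ℕ))]
    exact fun i => rfl
  have hmeas : ∀ s : Fin n → ZMod 2, MeasurableSet (e s +ᵥ cyl n) := by
    intro s
    rw [hvadd]
    have : {x : G2 | ∀ i : Fin n, x (i : ℕ) = s i}
        = ⋂ i : Fin n, {x : G2 | x (i : ℕ) = s i} := by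
      ext x; simp
    rw [this]
    refine MeasurableSet.iInter fun i => ?_
    have : MeasurableSet ((fun f : G2 => f (i : ℕ)) ⁻¹' {s i}) :=
      (measurable_pi_apply (i : ℕ)) trivial
    exact this
  have hdisj : Pairwise (Function.onFun Disjoint fun s : Fin n → ZMod 2 => e s +ᵥ cyl n) := by
    intro s t hst
    rw [Function.onFun, hvadd, hvadd, Set.disjoint_left]
    intro x hxs hxt
    exact hst (funext fun i => (hxs i).symm.trans (hxt i))
  have h1 : muG (⋃ s : Fin n → ZMod 2, e s +ᵥ cyl n)
      = ∑' s : Fin n → ZMod 2, muG (e s +ᵥ cyl n) := measure_iUnion hdisj hmeas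
  rw [hcover, muG_univ] at h1
  simp_rw [measure_vadd] at h1
  rw [tsum_fintype, Finset.sum_const, Finset.card_univ, Fintype.card_fun,
    Fintype.card_fin, ZMod.card, nsmul_eq_mul] at h1
  have h2 := congrArg (fun z => ((2 : ℝ≥0∞) ^ n)⁻¹ * z) h1.symm
  simp only [mul_one] at h2
  rw [Nat.cast_pow, Nat.cast_ofNat, ← mul_assoc,
    ENNReal.inv_mul_cancel (pow_ne_zero n two_ne_zero) (ENNReal.pow_ne_top ENNReal.ofNat_ne_top),
    one_mul] at h2
  exact h2

-- partial sums of the special coefficient sequences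

def gN (a : ℝ) (N : ℕ) : ℕ → ℝ :=
  fun j => if j ∈ Finset.Ico (2 ^ (2 * N)) (2 ^ (2 * N + 1)) then a else 0

lemma mS_ite (a : ℝ) (L U n : ℕ) (x : G2) :
    mS (fun j => if j ∈ Finset.Ico L U then a else 0) n x
      = a * ∑ k ∈ Finset.range n ∩ Finset.Ico L U, walsh k x := by
  rw [mS]
  simp only [ite_mul, zero_mul]
  rw [Finset.sum_ite_mem, Finset.mul_sum]

lemma mS_gN_zero (a : ℝ) (N n : ℕ) (h : n ≤ 2 ^ (2 * N)) (x : G2) :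
    mS (gN a N) n x = 0 := by
  unfold gN
  rw [mS_ite]
  have he : Finset.range n ∩ Finset.Ico (2 ^ (2 * N)) (2 ^ (2 * N + 1)) = ∅ := by
    ext k
    simp only [Finset.mem_inter, Finset.mem_range, Finset.mem_Ico, Finset.notMem_empty,
      iff_false]
    omega
  rw [he, Finset.sum_empty, mul_zero]

lemma mS_gN_mid (a : ℝ) (N : ℕ) (x : G2) :
    mS (gN a N) (2 ^ (2 * N) + 1) x = a * walsh (2 ^ (2 * N)) x := by
  unfold gN
  rw [mS_ite]
  have hlt : 2 ^ (2 * N) < 2 ^ (2 * N + 1) := Nat.pow_lt_pow_right (by norm_num) (by omega)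
  have he : Finset.range (2 ^ (2 * N) + 1) ∩ Finset.Ico (2 ^ (2 * N)) (2 ^ (2 * N + 1))
      = {2 ^ (2 * N)} := by
    ext k
    simp only [Finset.mem_inter, Finset.mem_range, Finset.mem_Ico, Finset.mem_singleton]
    omega
  rw [he, Finset.sum_singleton]

lemma mS_gN_full (a : ℝ) (N n : ℕ) (h : 2 ^ (2 * N + 1) ≤ n) (x : G2) :
    mS (gN a N) n x
      = a * (dirichlet (2 ^ (2 * N + 1)) x - dirichlet (2 ^ (2 * N)) x) := by
  unfold gN
  rw [mS_ite]
  have hle : 2 ^ (2 * N) ≤ 2 ^ (2 * N + 1) := Nat.pow_le_pow_right (by norm_num) (by omega)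
  have he : Finset.range n ∩ Finset.Ico (2 ^ (2 * N)) (2 ^ (2 * N + 1))
      = Finset.Ico (2 ^ (2 * N)) (2 ^ (2 * N + 1)) := by
    ext k
    simp only [Finset.mem_inter, Finset.mem_range, Finset.mem_Ico]
    omega
  rw [he, Finset.sum_Ico_eq_sub _ hle]
  rfl

lemma mMax_gN (a : ℝ) (N : ℕ) (x : G2) :
    mMax (gN a N) x
      = (‖a * (dirichlet (2 ^ (2 * N + 1)) x - dirichlet (2 ^ (2 * N)) x)‖₊ : ℝ≥0∞) := by
  apply le_antisymm
  · refine iSup_le fun m => ?_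
    rcases le_or_gt m (2 * N) with h | h
    · rw [mS_gN_zero a N _ (Nat.pow_le_pow_right (by norm_num) h) x]
      simp
    · rw [mS_gN_full a N _ (Nat.pow_le_pow_right (by norm_num) h) x]
  · have h := le_iSup (fun m => (‖mS (gN a N) (2 ^ m) x‖₊ : ℝ≥0∞)) (2 * N + 1)
    rwa [mS_gN_full a N _ le_rfl x] at h

lemma cyl_mono (N : ℕ) : cyl (2 * N + 1) ⊆ cyl (2 * N) :=
  fun x hx i hi => hx i (by omega)

lemma mMax_gN_eq (a : ℝ) (ha : 0 ≤ a) (N : ℕ) (x : G2) :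
    mMax (gN a N) x
      = Set.indicator (cyl (2 * N)) (fun _ => ENNReal.ofReal (a * 2 ^ (2 * N))) x := by
  rw [mMax_gN, dirichlet_two_pow', dirichlet_two_pow']
  by_cases h1 : x ∈ cyl (2 * N + 1)
  · have h0 : x ∈ cyl (2 * N) := cyl_mono N h1
    rw [if_pos h1, if_pos h0, Set.indicator_of_mem h0]
    have h2 : (2 : ℝ) ^ (2 * N + 1) - (2 : ℝ) ^ (2 * N) = 2 ^ (2 * N) := by ring
    rw [h2, ← Real.enorm_eq_ofReal (by positivity), enorm_eq_nnnorm]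
  · by_cases h0 : x ∈ cyl (2 * N)
    · rw [if_neg h1, if_pos h0, Set.indicator_of_mem h0, zero_sub, mul_neg, nnnorm_neg,
        ← Real.enorm_eq_ofReal (by positivity), enorm_eq_nnnorm]
    · rw [if_neg h1, if_neg h0, Set.indicator_of_notMem h0]
      simp

lemma mHp_gN (p a : ℝ) (hp : 0 < p) (ha : 0 ≤ a) (N : ℕ) :
    mHp p (gN a N)
      = (ENNReal.ofReal (a * 2 ^ (2 * N)) ^ p * ((2 : ℝ≥0∞) ^ (2 * N))⁻¹) ^ (1 / p) := by
  rw [mHp]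
  have heq : ∀ x, (mMax (gN a N) x) ^ p
      = Set.indicator (cyl (2 * N)) (fun _ => ENNReal.ofReal (a * 2 ^ (2 * N)) ^ p) x := by
    intro x
    rw [mMax_gN_eq a ha]
    by_cases h : x ∈ cyl (2 * N)
    · rw [Set.indicator_of_mem h, Set.indicator_of_mem h]
    · rw [Set.indicator_of_notMem h, Set.indicator_of_notMem h,
        ENNReal.zero_rpow_of_pos hp]
  simp_rw [heq]
  rw [lintegral_indicator_const (measurableSet_cyl _), muG_cyl]

lemma final_mHp (p : ℝ) (hp : 0 < p) (N : ℕ) :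
    mHp p (gN (((2 : ℝ) ^ (2 * N)) ^ (1 / p - 1)) N) = 1 := by
  set B : ℝ := (2 : ℝ) ^ (2 * N) with hB
  have hB0 : 0 < B := by positivity
  have ha : 0 ≤ B ^ (1 / p - 1) := (Real.rpow_pos_of_pos hB0 _).le
  rw [mHp_gN p _ hp ha N]
  have h1 : B ^ (1 / p - 1) * B = B ^ (1 / p) := by
    rw [← Real.rpow_add_one hB0.ne']
    norm_num
  rw [h1, ENNReal.ofReal_rpow_of_pos (Real.rpow_pos_of_pos hB0 _),
    ← Real.rpow_mul hB0.le, one_div_mul_cancel hp.ne', Real.rpow_one, hB,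
    ENNReal.ofReal_pow (by norm_num : (0:ℝ) ≤ 2)]
  norm_num
  rw [ENNReal.mul_inv_cancel (pow_ne_zero _ two_ne_zero) (ENNReal.pow_ne_top ENNReal.ofNat_ne_top),
    ENNReal.one_rpow]

lemma weakLp_of_abs_const (p : ℝ) (hp : 0 < p) (f : G2 → ℝ) (a : ℝ) (ha : 0 < a)
    (h : ∀ x, |f x| = a) : weakLp p f = ENNReal.ofReal a := by
  have hterm : ∀ t : NNReal, (t : ℝ≥0∞) * (muG {x | (t : ℝ) < |f x|}) ^ (1 / p)
      = if (t : ℝ) < a then (t : ℝ≥0∞) else 0 := by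
    intro t
    by_cases ht : (t : ℝ) < a
    · have hs : {x : G2 | (t : ℝ) < |f x|} = Set.univ := by
        ext x; simp [h x, ht]
      rw [hs, muG_univ, ENNReal.one_rpow, mul_one, if_pos ht]
    · have hs : {x : G2 | (t : ℝ) < |f x|} = ∅ := by
        ext x; simp [h x, ht]
      rw [hs, measure_empty, ENNReal.zero_rpow_of_pos (by positivity), mul_zero, if_neg ht]
  rw [weakLp]
  simp_rw [hterm]
  apply le_antisymm
  · refine iSup_le fun t => ?_
    split_ifs with ht
    · rw [← ENNReal.ofReal_coe_nnreal]
      exact ENNReal.ofReal_le_ofReal ht.le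
    · exact zero_le
  · refine le_of_forall_lt fun c hc => ?_
    obtain ⟨r, hr1, hr2⟩ := ENNReal.lt_iff_exists_nnreal_btwn.1 hc
    have hr : (r : ℝ) < a := by
      rwa [← ENNReal.ofReal_coe_nnreal, ENNReal.ofReal_lt_ofReal_iff ha] at hr2
    calc c < (r : ℝ≥0∞) := hr1
      _ = if (r : ℝ) < a then (r : ℝ≥0∞) else 0 := by rw [if_pos hr]
      _ ≤ ⨆ t : NNReal, if (t : ℝ) < a then (t : ℝ≥0∞) else 0 :=
          le_iSup (fun t : NNReal => if (t : ℝ) < a then (t : ℝ≥0∞) else 0) r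

lemma weakLp_mS (p : ℝ) (hp : 0 < p) (a : ℝ) (ha : 0 < a) (N : ℕ) :
    weakLp p (mS (gN a N) (2 ^ (2 * N) + 1)) = ENNReal.ofReal a := by
  refine weakLp_of_abs_const p hp _ a ha fun x => ?_
  rw [mS_gN_mid, abs_mul, abs_walsh, mul_one, abs_of_pos ha]


theorem stmt17 (p : ℝ) (hp : 0 < p) (hp1 : p < 1) (φ : ℕ → ℝ)
    (hφ1 : ∀ n, 1 ≤ φ n) (hφm : Monotone φ)
    (hφ : Filter.atTop.limsup
        (fun n : ℕ => ENNReal.ofReal (((n : ℝ) + 1) ^ (1 / p - 1) / φ n)) = ⊤) :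
    ∃ (g : ℕ → ℕ → ℝ) (nk : ℕ → ℕ),
      (∀ k, mHp p (g k) ≤ 1) ∧
      Tendsto (fun k : ℕ => weakLp p (mS (g k) (nk k)) / ENNReal.ofReal (φ (nk k)))
        atTop (nhds ⊤) := by
  have hq0 : 0 < 1 / p - 1 := by
    have h1 : 1 < 1 / p := one_lt_one_div hp hp1
    linarith
  have hφpos : ∀ n, 0 < φ n := fun n => lt_of_lt_of_le one_pos (hφ1 n)
  -- selection of indices
  have key : ∀ k : ℕ, ∃ m : ℕ, 2 ≤ m ∧ (k : ℝ) < ((m : ℝ) + 1) ^ (1 / p - 1) / φ m := by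
    intro k
    have hlt : (k : ℝ≥0∞) < atTop.limsup
        (fun n : ℕ => ENNReal.ofReal (((n : ℝ) + 1) ^ (1 / p - 1) / φ n)) := by
      rw [hφ]; exact ENNReal.natCast_lt_top k
    have hfreq := Filter.frequently_lt_of_lt_limsup (by isBoundedDefault) hlt
    obtain ⟨m, hm2, hmk⟩ := Filter.frequently_atTop.1 hfreq 2
    refine ⟨m, hm2, ?_⟩
    by_contra hcon
    push_neg at hcon
    have : ENNReal.ofReal (((m : ℝ) + 1) ^ (1 / p - 1) / φ m) ≤ (k : ℝ≥0∞) := by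
      rw [← ENNReal.ofReal_natCast k]
      exact ENNReal.ofReal_le_ofReal hcon
    exact absurd hmk (not_lt.2 this)
  choose m hm2 hmk using key
  set N : ℕ → ℕ := fun k => Nat.log 4 (m k - 1) with hN
  set a : ℕ → ℝ := fun k => ((2 : ℝ) ^ (2 * N k)) ^ (1 / p - 1) with haa
  have hak : ∀ k, 0 < a k := fun k => Real.rpow_pos_of_pos (by positivity) _
  refine ⟨fun k => gN (a k) (N k), fun k => 2 ^ (2 * N k) + 1, fun k => le_of_eq ?_, ?_⟩
  · exact final_mHp p hp (N k)
  · -- basic index facts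
    have hP1 : ∀ k, 1 ≤ 4 ^ N k := fun k => Nat.one_le_pow _ _ (by norm_num)
    have h4 : ∀ k, 4 ^ N k ≤ m k - 1 := fun k =>
      Nat.pow_log_le_self 4 (by have := hm2 k; omega)
    have h5 : ∀ k, m k - 1 < 4 ^ (N k + 1) := fun k =>
      Nat.lt_pow_succ_log_self (by norm_num) _
    have h24 : ∀ k, (2 : ℕ) ^ (2 * N k) = 4 ^ N k := by
      intro k; rw [pow_mul]; norm_num
    have hmn : ∀ k, 2 ^ (2 * N k) + 1 ≤ m k := by
      intro k
      rw [h24 k]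
      have := h4 k; have := hm2 k; omega
    have hm16 : ∀ k, m k + 1 ≤ 16 * 4 ^ N k := by
      intro k
      have hh5 := h5 k; have := hm2 k; have := hP1 k
      have h45 : (4 : ℕ) ^ (N k + 1) = 4 * 4 ^ N k := by ring
      omega
    set c : ℝ := (16 : ℝ) ^ (-(1 / p - 1)) with hc
    have hc0 : 0 < c := Real.rpow_pos_of_pos (by norm_num) _
    -- lower bound for the ratio
    have hlow : ∀ k : ℕ, c * k ≤ a k / φ (2 ^ (2 * N k) + 1) := by
      intro k
      have hB : ((2 : ℝ) ^ (2 * N k)) = ((4 : ℕ) ^ N k : ℝ) := by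
        push_cast
        rw [pow_mul]; norm_num
      have hm16' : ((m k : ℝ) + 1) ≤ 16 * ((4 : ℕ) ^ N k : ℝ) := by
        have := hm16 k
        push_cast
        exact_mod_cast this
      have hpow : ((m k : ℝ) + 1) ^ (1 / p - 1)
          ≤ (16 : ℝ) ^ (1 / p - 1) * ((4 : ℕ) ^ N k : ℝ) ^ (1 / p - 1) := by
        rw [← Real.mul_rpow (by norm_num) (by positivity)]
        exact Real.rpow_le_rpow (by positivity) hm16' hq0.le
      have hBlow : c * ((m k : ℝ) + 1) ^ (1 / p - 1) ≤ a k := by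
        calc c * ((m k : ℝ) + 1) ^ (1 / p - 1)
            ≤ c * ((16 : ℝ) ^ (1 / p - 1) * ((4 : ℕ) ^ N k : ℝ) ^ (1 / p - 1)) :=
              mul_le_mul_of_nonneg_left hpow hc0.le
          _ = (c * (16 : ℝ) ^ (1 / p - 1)) * ((4 : ℕ) ^ N k : ℝ) ^ (1 / p - 1) := by ring
          _ = a k := by
              rw [hc, ← Real.rpow_add (by norm_num : (0:ℝ) < 16), neg_add_cancel,
                Real.rpow_zero, one_mul, ← hB]
      calc c * (k : ℝ) ≤ c * (((m k : ℝ) + 1) ^ (1 / p - 1) / φ (m k)) :=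
            mul_le_mul_of_nonneg_left (hmk k).le hc0.le
        _ = (c * ((m k : ℝ) + 1) ^ (1 / p - 1)) / φ (m k) := by ring
        _ ≤ a k / φ (m k) := by
            have h1 := hφpos (m k)
            gcongr
        _ ≤ a k / φ (2 ^ (2 * N k) + 1) := by
            have h1 := hφpos (2 ^ (2 * N k) + 1)
            have h2 := hφm (hmn k)
            have h3 := (hak k).le
            gcongr
    -- the values of the ratio
    have hval : ∀ k, weakLp p (mS (gN (a k) (N k)) (2 ^ (2 * N k) + 1))
          / ENNReal.ofReal (φ (2 ^ (2 * N k) + 1))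
        = ENNReal.ofReal (a k / φ (2 ^ (2 * N k) + 1)) := by
      intro k
      rw [weakLp_mS p hp _ (hak k), ← ENNReal.ofReal_div_of_pos (hφpos _)]
    have htop : Tendsto (fun k : ℕ => ENNReal.ofReal (c * k)) atTop (nhds ⊤) := by
      refine ENNReal.tendsto_nhds_top fun n => ?_
      filter_upwards [Filter.eventually_ge_atTop (⌈((n : ℝ) + 1) / c⌉₊)] with k hk
      have hk' : ((n : ℝ) + 1) / c ≤ (k : ℝ) := (Nat.ceil_le.1 le_rfl).trans (by exact_mod_cast hk)
      have hnk : (n : ℝ) < c * k := by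
        have := (div_le_iff₀ hc0).1 hk'
        nlinarith
      rw [← ENNReal.ofReal_natCast n]
      exact (ENNReal.ofReal_lt_ofReal_iff (lt_of_le_of_lt (Nat.cast_nonneg n) hnk)).2 hnk
    refine tendsto_nhds_top_mono htop ?_
    filter_upwards with k
    rw [hval k]
    exact ENNReal.ofReal_le_ofReal (hlow k)

end
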